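/- (Approximation of homogeneous functions) Let M be a compact smooth manifold, k ≥ 1, p > 1, and let H₀ : M × ℝ^k → ℝ be continuous, positive for t ≠ 0, and homogeneous of degree p in t. Then for every ε > 0 there exists H : M × ℝ^k → ℝ, continuous, positive for t ≠ 0, of class C¹ in t, homogeneous of degree p in t, such that |H(x,t) − H₀(x,t)| ≤ ε|t|^p for all (x,t). -/

import Mathlib

open Metric Set MeasureTheory Filter Topology

/-- Scaling identity for the homogeneous extension. -/
lemma aux_hom {E : Type*} [NormedAddCommGroup E] [NormedSpace ℝ E] {p : ℝ} (hp : 0 < p)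
    (G : E → ℝ) {l : ℝ} (hl : 0 < l) (t : E) :
    ‖l • t‖ ^ p * G (‖l • t‖⁻¹ • (l • t)) = l ^ p * (‖t‖ ^ p * G (‖t‖⁻¹ • t)) := by
  rcases eq_or_ne t 0 with rfl | ht
  · simp [Real.zero_rpow hp.ne']
  · have hnt : (0:ℝ) < ‖t‖ := norm_pos_iff.2 ht
    have hnorm : ‖l • t‖ = l * ‖t‖ := by
      rw [norm_smul, Real.norm_eq_abs, abs_of_pos hl]
    have h1 : (l * ‖t‖)⁻¹ • (l • t) = ‖t‖⁻¹ • t := by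
      rw [smul_smul]; congr 1; field_simp
    rw [hnorm, h1, Real.mul_rpow hl.le hnt.le, mul_assoc]

/-- The homogeneous extension of degree `p > 1` of a `C¹` function is `C¹`. -/
lemma aux_contDiff {E : Type*} [NormedAddCommGroup E] [InnerProductSpace ℝ E]
    [FiniteDimensional ℝ E] [Nontrivial E] {p : ℝ} (hp : 1 < p) {G : E → ℝ}
    (hG : ContDiff ℝ 1 G) :
    ContDiff ℝ 1 (fun t : E => ‖t‖ ^ p * G (‖t‖⁻¹ • t)) := by
  set f : E → ℝ := fun t => ‖t‖ ^ p * G (‖t‖⁻¹ • t) with hf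
  have hp0 : (0:ℝ) < p := lt_trans one_pos hp
  have hp1 : (0:ℝ) < p - 1 := by linarith
  have hf0 : f 0 = 0 := by simp [hf, Real.zero_rpow hp0.ne']
  -- C¹ away from 0
  have hC1ne : ∀ t : E, t ≠ 0 → ContDiffAt ℝ 1 f t := by
    intro t ht
    have hnt : ‖t‖ ≠ 0 := norm_ne_zero_iff.2 ht
    have hn : ContDiffAt ℝ 1 (fun s : E => ‖s‖) t := contDiffAt_norm ℝ ht
    have h1 : ContDiffAt ℝ 1 (fun s : E => ‖s‖ ^ p) t :=
      (Real.contDiffAt_rpow_const_of_ne hnt).comp t hn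
    have h2 : ContDiffAt ℝ 1 (fun s : E => ‖s‖⁻¹ • s) t :=
      (hn.inv hnt).smul contDiffAt_id
    exact h1.mul ((hG.contDiffAt).comp t h2)
  -- sphere bounds
  obtain ⟨θ₀, hθ₀⟩ : (sphere (0:E) 1).Nonempty :=
    NormedSpace.sphere_nonempty.2 zero_le_one
  obtain ⟨a, ha, haC⟩ := (isCompact_sphere (0:E) 1).exists_isMaxOn ⟨θ₀, hθ₀⟩
    (continuous_abs.comp hG.continuous).continuousOn
  set C : ℝ := |G a| with hC
  have hCb : ∀ t : E, t ≠ 0 → |f t| ≤ C * ‖t‖ ^ p := by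
    intro t ht
    have hnt : (0:ℝ) < ‖t‖ := norm_pos_iff.2 ht
    have hθ : ‖t‖⁻¹ • t ∈ sphere (0:E) 1 := by
      simp [norm_smul, abs_of_pos (inv_pos.2 hnt), inv_mul_cancel₀ hnt.ne']
    have hrp : (0:ℝ) ≤ ‖t‖ ^ p := Real.rpow_nonneg hnt.le p
    calc |f t| = ‖t‖ ^ p * |G (‖t‖⁻¹ • t)| := by
          rw [hf, abs_mul, abs_of_nonneg hrp]
      _ ≤ ‖t‖ ^ p * C := by
          exact mul_le_mul_of_nonneg_left (haC hθ) hrp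
      _ = C * ‖t‖ ^ p := mul_comm _ _
  -- derivative at 0 is 0
  have hd0 : HasFDerivAt f (0 : E →L[ℝ] ℝ) 0 := by
    rw [hasFDerivAt_iff_isLittleO_nhds_zero, Asymptotics.isLittleO_iff]
    intro c hc
    have htend : Tendsto (fun t : E => C * ‖t‖ ^ (p - 1)) (𝓝 0) (𝓝 0) := by
      have hc1 : Continuous (fun t : E => C * ‖t‖ ^ (p - 1)) :=
        continuous_const.mul ((Real.continuous_rpow_const hp1.le).comp continuous_norm)
      have := hc1.tendsto (0 : E)
      simpa [Real.zero_rpow hp1.ne'] using this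
    filter_upwards [htend.eventually_le_const hc] with t ht
    simp only [zero_add, hf0, sub_zero, ContinuousLinearMap.zero_apply]
    rcases eq_or_ne t 0 with rfl | htne
    · simp [hf0]
    · have hnt : (0:ℝ) < ‖t‖ := norm_pos_iff.2 htne
      have hpow : ‖t‖ ^ (p - 1) * ‖t‖ = ‖t‖ ^ p := by
        rw [← Real.rpow_add_one hnt.ne' (p - 1)]; norm_num
      have h1 : |f t| ≤ (C * ‖t‖ ^ (p - 1)) * ‖t‖ := by
        rw [mul_assoc, hpow]; exact hCb t htne
      calc ‖f t‖ ≤ (C * ‖t‖ ^ (p - 1)) * ‖t‖ := h1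
        _ ≤ c * ‖t‖ := mul_le_mul_of_nonneg_right ht (norm_nonneg t)
  have hdiff : Differentiable ℝ f := by
    intro t
    rcases eq_or_ne t 0 with rfl | ht
    · exact hd0.differentiableAt
    · exact (hC1ne t ht).differentiableAt one_ne_zero
  have hfd0 : fderiv ℝ f 0 = 0 := hd0.fderiv
  have hopen : IsOpen {t : E | t ≠ 0} := isOpen_compl_singleton
  have hcd : ContDiffOn ℝ 1 f {t : E | t ≠ 0} := fun t ht => (hC1ne t ht).contDiffWithinAt
  have hfdcont : ContinuousOn (fderiv ℝ f) {t : E | t ≠ 0} :=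
    hcd.continuousOn_fderiv_of_isOpen hopen le_rfl
  -- bound on the derivative on the sphere
  have hsub : sphere (0:E) 1 ⊆ {t : E | t ≠ 0} := fun t ht => by
    simp only [mem_sphere_zero_iff_norm] at ht
    simp only [Set.mem_setOf_eq]
    intro h; rw [h] at ht; simp at ht
  obtain ⟨b, hb, hbC⟩ := (isCompact_sphere (0:E) 1).exists_isMaxOn ⟨θ₀, hθ₀⟩
    ((continuous_norm.comp_continuousOn (hfdcont.mono hsub)))
  set C' : ℝ := ‖fderiv ℝ f b‖ with hC'
  have hC'0 : 0 ≤ C' := norm_nonneg _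
  have hfdb : ∀ t : E, t ≠ 0 → ‖fderiv ℝ f t‖ ≤ C' * ‖t‖ ^ (p - 1) := by
    intro t ht
    have hnt : (0:ℝ) < ‖t‖ := norm_pos_iff.2 ht
    set l : ℝ := ‖t‖ with hl
    set θ : E := ‖t‖⁻¹ • t with hθdef
    have hθs : θ ∈ sphere (0:E) 1 := by
      simp [hθdef, norm_smul, abs_of_pos (inv_pos.2 hnt), inv_mul_cancel₀ hnt.ne'] <;> exact inv_mul_cancel₀ hnt.ne'
    have hθne : θ ≠ 0 := hsub hθs
    have hlθ : l • θ = t := by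
      rw [hθdef, smul_smul, mul_inv_cancel₀ hnt.ne', one_smul]
    have hft : DifferentiableAt ℝ f t := hdiff t
    have hfθ : DifferentiableAt ℝ f θ := hdiff θ
    -- chain rule identity
    have e2 : HasFDerivAt (fun s : E => l ^ p * f s) (l ^ p • fderiv ℝ f θ) θ :=
      hfθ.hasFDerivAt.const_mul (l ^ p)
    have e1 : HasFDerivAt (fun s : E => f (l • s)) (l • fderiv ℝ f t) θ := by
      have h2 : HasFDerivAt (fun s : E => l • s) (l • ContinuousLinearMap.id ℝ E) θ :=
        (hasFDerivAt_id θ).const_smul l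
      have h3 : HasFDerivAt f (fderiv ℝ f t) (l • θ) := by rw [hlθ]; exact hft.hasFDerivAt
      have h4 := h3.comp θ h2
      have h5 : (fderiv ℝ f t).comp (l • ContinuousLinearMap.id ℝ E) = l • fderiv ℝ f t := by
        ext v
        simp [_root_.map_smul]
      rwa [h5] at h4
    have efun : (fun s : E => f (l • s)) = fun s : E => l ^ p * f s :=
      funext fun s => aux_hom hp0 G hnt s
    rw [efun] at e1
    have key : l • fderiv ℝ f t = l ^ p • fderiv ℝ f θ := e1.unique e2
    have hlp : l⁻¹ * l ^ p = l ^ (p - 1) := by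
      rw [Real.rpow_sub hnt p 1, Real.rpow_one]
      field_simp
    have key2 : fderiv ℝ f t = l ^ (p - 1) • fderiv ℝ f θ := by
      have := congrArg (fun A : E →L[ℝ] ℝ => l⁻¹ • A) key
      simpa [smul_smul, inv_smul_smul₀ hnt.ne', hlp] using this
    rw [key2, norm_smul, Real.norm_eq_abs, abs_of_nonneg (Real.rpow_nonneg hnt.le _)]
    rw [mul_comm]
    exact mul_le_mul_of_nonneg_right (hbC hθs) (Real.rpow_nonneg hnt.le _)
  have hfdcont' : Continuous (fderiv ℝ f) := by
    rw [continuous_iff_continuousAt]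
    intro t
    rcases eq_or_ne t 0 with rfl | ht
    · rw [ContinuousAt, hfd0]
      apply squeeze_zero_norm (a := fun t : E => C' * ‖t‖ ^ (p - 1))
      · intro s
        rcases eq_or_ne s 0 with rfl | hs
        · simp [hfd0, Real.zero_rpow hp1.ne']
        · exact hfdb s hs
      · have hc1 : Continuous (fun t : E => C' * ‖t‖ ^ (p - 1)) :=
          continuous_const.mul ((Real.continuous_rpow_const hp1.le).comp continuous_norm)
        have := hc1.tendsto (0 : E)
        simpa [Real.zero_rpow hp1.ne'] using this
    · exact hfdcont.continuousAt (hopen.mem_nhds ht)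
  exact contDiff_one_iff_fderiv.2 ⟨hdiff, hfdcont'⟩

open scoped Convolution

/-- Approximation of positive homogeneous continuous functions: a continuous
function `H₀ : M × ℝ^k → ℝ`, positive for `t ≠ 0` and homogeneous of degree
`p > 1` in `t`, can be approximated by a function `H` of the same kind which is
moreover `C¹` in `t`, with `|H(x,t) - H₀(x,t)| ≤ ε |t|^p`. -/
theorem stmt7 (M : Type*) [TopologicalSpace M] [CompactSpace M]
    (k : ℕ) (hk : 1 ≤ k) (p : ℝ) (hp : 1 < p)
    (H0 : M × EuclideanSpace ℝ (Fin k) → ℝ)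
    (hcont : Continuous H0)
    (hpos : ∀ x t, t ≠ 0 → 0 < H0 (x, t))
    (hhom : ∀ (x : M) (l : ℝ), 0 < l → ∀ t, H0 (x, l • t) = l ^ p * H0 (x, t))
    (ε : ℝ) (hε : 0 < ε) :
    ∃ H : M × EuclideanSpace ℝ (Fin k) → ℝ,
      Continuous H ∧
      (∀ x t, t ≠ 0 → 0 < H (x, t)) ∧
      (∀ x : M, ContDiff ℝ 1 (fun t => H (x, t))) ∧
      (∀ (x : M) (l : ℝ), 0 < l → ∀ t, H (x, l • t) = l ^ p * H (x, t)) ∧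
      ∀ x t, |H (x, t) - H0 (x, t)| ≤ ε * ‖t‖ ^ p := by
  rcases isEmpty_or_nonempty M with hM | hM
  · exact ⟨H0, hcont, hpos, fun x => (IsEmpty.false x).elim, hhom,
      fun x t => (IsEmpty.false x).elim⟩
  have hp0 : (0:ℝ) < p := by linarith
  haveI : Nonempty (Fin k) := ⟨⟨0, hk⟩⟩
  haveI : Nontrivial (EuclideanSpace ℝ (Fin k)) := by
    refine nontrivial_of_ne (EuclideanSpace.single ⟨0, hk⟩ (1:ℝ)) 0 ?_
    intro h
    have := congrArg (fun v : EuclideanSpace ℝ (Fin k) => v ⟨0, hk⟩) h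
    simp [EuclideanSpace.single_apply] at this
  -- value at 0
  have h00 : ∀ x : M, H0 (x, 0) = 0 := by
    intro x
    have h := hhom x 2 two_pos 0
    rw [smul_zero] at h
    have h2 : (1:ℝ) < 2 ^ p := Real.one_lt_rpow_iff_of_pos two_pos |>.2 (Or.inl ⟨one_lt_two, hp0⟩)
    have h3 : (1 - (2:ℝ) ^ p) * H0 (x, 0) = 0 := by linarith
    rcases mul_eq_zero.1 h3 with h4 | h4
    · linarith
    · exact h4
  -- min and max on the sphere
  have hKcomp : IsCompact ((Set.univ : Set M) ×ˢ sphere (0 : EuclideanSpace ℝ (Fin k)) 1) :=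
    isCompact_univ.prod (isCompact_sphere 0 1)
  have hsphne : (sphere (0 : EuclideanSpace ℝ (Fin k)) 1).Nonempty :=
    NormedSpace.sphere_nonempty.2 zero_le_one
  have hKne : ((Set.univ : Set M) ×ˢ sphere (0 : EuclideanSpace ℝ (Fin k)) 1).Nonempty :=
    univ_nonempty.prod hsphne
  obtain ⟨qmin, hqmin, hqminle⟩ := hKcomp.exists_isMinOn hKne hcont.continuousOn
  obtain ⟨qmax, hqmax, hqmaxle⟩ := hKcomp.exists_isMaxOn hKne hcont.continuousOn
  have hqmin2 : qmin.2 ≠ 0 := by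
    have h1 : qmin.2 ∈ sphere (0 : EuclideanSpace ℝ (Fin k)) 1 := hqmin.2
    rw [mem_sphere_zero_iff_norm] at h1
    intro h; rw [h] at h1; simp at h1
  have hm : 0 < H0 qmin := by
    have := hpos qmin.1 qmin.2 hqmin2
    simpa using this
  set ε' : ℝ := min ε (H0 qmin / 2) with hε'def
  have hε' : 0 < ε' := lt_min hε (by linarith)
  -- uniform modulus of continuity near the sphere, via the tube lemma
  set Φ : (M × EuclideanSpace ℝ (Fin k)) × EuclideanSpace ℝ (Fin k) → ℝ :=
    fun q => |H0 (q.1.1, q.1.2 + q.2) - H0 q.1| with hΦdef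
  have hΦcont : Continuous Φ := by
    apply Continuous.abs
    apply Continuous.sub
    · exact hcont.comp ((continuous_fst.comp continuous_fst).prodMk
        ((continuous_snd.comp continuous_fst).add continuous_snd))
    · exact hcont.comp continuous_fst
  have hUopen : IsOpen (Φ ⁻¹' Set.Iio ε') := hΦcont.isOpen_preimage _ isOpen_Iio
  have hsubU : ((Set.univ : Set M) ×ˢ sphere (0 : EuclideanSpace ℝ (Fin k)) 1) ×ˢ
      ({0} : Set (EuclideanSpace ℝ (Fin k))) ⊆ Φ ⁻¹' Set.Iio ε' := by
    rintro ⟨q, s⟩ ⟨hq, hs⟩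
    simp only [Set.mem_singleton_iff] at hs
    subst hs
    simp [hΦdef, hε']
  obtain ⟨u, v, hu, hv, hKu, h0v, huv⟩ :=
    generalized_tube_lemma hKcomp isCompact_singleton hUopen hsubU
  obtain ⟨δ0, hδ0, hballv⟩ := Metric.isOpen_iff.1 hv 0 (h0v rfl)
  set δ : ℝ := min δ0 (1/2) with hδdef
  have hδ : 0 < δ := lt_min hδ0 (by norm_num)
  have hδhalf : δ ≤ 1/2 := min_le_right _ _
  have hmod : ∀ (x : M) (t s : EuclideanSpace ℝ (Fin k)), ‖t‖ = 1 → dist s t < δ →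
      |H0 (x, s) - H0 (x, t)| ≤ ε' := by
    intro x t s ht hst
    have hmemu : (x, t) ∈ u := hKu ⟨Set.mem_univ x, by simp [ht]⟩
    have hmemv : s - t ∈ v := by
      apply hballv
      rw [Metric.mem_ball, dist_zero_right, ← dist_eq_norm]
      exact lt_of_lt_of_le hst (min_le_left _ _)
    have h1 := huv (show ((x, t), s - t) ∈ u ×ˢ v from ⟨hmemu, hmemv⟩)
    simp only [Set.mem_preimage, Set.mem_Iio, hΦdef] at h1
    rw [add_sub_cancel] at h1
    exact h1.le
  -- bump functions
  set φ : ContDiffBump (0 : EuclideanSpace ℝ (Fin k)) :=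
    ⟨δ/2, δ, by positivity, by linarith⟩ with hφdef
  set φ2 : ContDiffBump (0 : EuclideanSpace ℝ (Fin k)) :=
    ⟨2, 3, two_pos, by norm_num⟩ with hφ2def
  have hφ2one : ∀ s : EuclideanSpace ℝ (Fin k), ‖s‖ ≤ 2 → φ2 s = 1 := by
    intro s hs
    apply φ2.one_of_mem_closedBall
    rwa [Metric.mem_closedBall, dist_zero_right]
  set g : M → EuclideanSpace ℝ (Fin k) → ℝ := fun x s => H0 (x, s) * φ2 s with hgdef
  have hgc : ∀ x, Continuous (g x) := by
    intro x
    exact (hcont.comp (continuous_const.prodMk continuous_id)).mul φ2.continuous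
  have hgsupp : ∀ (x : M) (s : EuclideanSpace ℝ (Fin k)),
      s ∉ Metric.closedBall (0 : EuclideanSpace ℝ (Fin k)) 3 → g x s = 0 := by
    intro x s hs
    rw [Metric.mem_closedBall, dist_zero_right, not_le] at hs
    have : φ2 s = 0 := by
      apply φ2.zero_of_le_dist
      rw [dist_zero_right]
      exact le_of_lt hs
    simp [hgdef, this]
  set F : M → EuclideanSpace ℝ (Fin k) → ℝ :=
    fun x => (φ.normed volume ⋆[ContinuousLinearMap.lsmul ℝ ℝ, volume] g x) with hFdef
  have hFsm : ∀ x, ContDiff ℝ 1 (F x) := by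
    intro x
    exact φ.hasCompactSupport_normed.contDiff_convolution_left _ (φ.contDiff_normed)
      ((hgc x).locallyIntegrable)
  have hFcont : Continuous (fun q : M × EuclideanSpace ℝ (Fin k) => F q.1 q.2) := by
    rw [continuousOn_univ.symm]
    have hgj : ContinuousOn (Function.uncurry g)
        ((Set.univ : Set M) ×ˢ (Set.univ : Set (EuclideanSpace ℝ (Fin k)))) :=
      ((hcont.mul (φ2.continuous.comp continuous_snd))).continuousOn
    have := continuousOn_convolution_right_with_param (ContinuousLinearMap.lsmul ℝ ℝ)
      (isCompact_closedBall (0 : EuclideanSpace ℝ (Fin k)) 3)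
      (fun x s _ hs => hgsupp x s hs)
      ((φ.integrable_normed (μ := volume)).locallyIntegrable) hgj
    simpa [Set.univ_prod_univ] using this
  have hclose : ∀ (x : M) (t : EuclideanSpace ℝ (Fin k)), ‖t‖ = 1 →
      |F x t - H0 (x, t)| ≤ ε' := by
    intro x t ht
    have hgt : g x t = H0 (x, t) := by
      rw [hgdef]; simp only []; rw [hφ2one t (by rw [ht]; norm_num), mul_one]
    have key : dist ((φ.normed volume ⋆[ContinuousLinearMap.lsmul ℝ ℝ, volume] g x) t)
        (g x t) ≤ ε' := by
      apply φ.dist_normed_convolution_le ((hgc x).aestronglyMeasurable)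
      intro s hs
      rw [Metric.mem_ball] at hs
      have hrOut : φ.rOut = δ := rfl
      rw [hrOut] at hs
      have hns : ‖s‖ ≤ 2 := by
        have h1 : ‖s - t‖ < δ := by rwa [← dist_eq_norm]
        have h2 : ‖s‖ ≤ ‖s - t‖ + ‖t‖ := by simpa using norm_add_le (s - t) t
        linarith [hδhalf]
      rw [hgt, hgdef]
      simp only []
      rw [hφ2one s hns, mul_one, Real.dist_eq]
      exact hmod x t s ht hs
    rw [hgt, Real.dist_eq] at key
    exact key
  -- bounds for F on the sphere
  have hsphmem : ∀ (x : M) (t : EuclideanSpace ℝ (Fin k)), ‖t‖ = 1 →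
      ((x, t) : M × EuclideanSpace ℝ (Fin k)) ∈
        (Set.univ : Set M) ×ˢ sphere (0 : EuclideanSpace ℝ (Fin k)) 1 :=
    fun x t ht => ⟨Set.mem_univ x, by simp [ht]⟩
  have hFlb : ∀ (x : M) (t : EuclideanSpace ℝ (Fin k)), ‖t‖ = 1 → H0 qmin - ε' ≤ F x t := by
    intro x t ht
    have h1 := hclose x t ht
    have h2 : H0 qmin ≤ H0 (x, t) := hqminle (hsphmem x t ht)
    have h3 := abs_le.1 h1
    linarith [h3.1]
  have hFub : ∀ (x : M) (t : EuclideanSpace ℝ (Fin k)), ‖t‖ = 1 →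
      |F x t| ≤ H0 qmax + ε' := by
    intro x t ht
    have h1 := hclose x t ht
    have h2 : H0 (x, t) ≤ H0 qmax := hqmaxle (hsphmem x t ht)
    have h4 : 0 < H0 (x, t) := by
      apply hpos
      intro h; rw [h] at ht; simp at ht
    have h3 := abs_le.1 h1
    rw [abs_le]
    constructor <;> linarith [h3.1, h3.2]
  have hunit : ∀ t : EuclideanSpace ℝ (Fin k), t ≠ 0 → ‖‖t‖⁻¹ • t‖ = 1 := by
    intro t ht
    have hnt : (0:ℝ) < ‖t‖ := norm_pos_iff.2 ht
    rw [norm_smul, Real.norm_eq_abs, abs_of_pos (inv_pos.2 hnt), inv_mul_cancel₀ hnt.ne']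
  refine ⟨fun q => ‖q.2‖ ^ p * F q.1 (‖q.2‖⁻¹ • q.2), ?_, ?_, ?_, ?_, ?_⟩
  · -- continuity
    rw [continuous_iff_continuousAt]
    rintro ⟨x₀, t₀⟩
    rcases eq_or_ne t₀ 0 with rfl | ht₀
    · have h0 : Tendsto (fun q : M × EuclideanSpace ℝ (Fin k) =>
          ‖q.2‖ ^ p * F q.1 (‖q.2‖⁻¹ • q.2)) (𝓝 (x₀, 0)) (𝓝 0) := by
        apply squeeze_zero_norm (a := fun q : M × EuclideanSpace ℝ (Fin k) =>
          (H0 qmax + ε') * ‖q.2‖ ^ p)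
        · intro q
          rcases eq_or_ne q.2 0 with h | h
          · simp [h, Real.zero_rpow hp0.ne']
          · have hnt : (0:ℝ) < ‖q.2‖ := norm_pos_iff.2 h
            have hrp : (0:ℝ) ≤ ‖q.2‖ ^ p := Real.rpow_nonneg hnt.le p
            rw [Real.norm_eq_abs, abs_mul, abs_of_nonneg hrp, mul_comm ((H0 qmax + ε')) _]
            exact mul_le_mul_of_nonneg_left (hFub q.1 _ (hunit q.2 h)) hrp
        · have hc1 : Continuous (fun q : M × EuclideanSpace ℝ (Fin k) =>
              (H0 qmax + ε') * ‖q.2‖ ^ p) :=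
            continuous_const.mul ((Real.continuous_rpow_const hp0.le).comp
              (continuous_norm.comp continuous_snd))
          have := hc1.tendsto (x₀, 0)
          simpa [Real.zero_rpow hp0.ne'] using this
      rw [ContinuousAt]
      simpa [Real.zero_rpow hp0.ne'] using h0
    · apply ContinuousAt.mul
      · exact ((Real.continuous_rpow_const hp0.le).comp
          (continuous_norm.comp continuous_snd)).continuousAt
      · have h1 : ContinuousAt (fun q : M × EuclideanSpace ℝ (Fin k) =>
            (q.1, ‖q.2‖⁻¹ • q.2)) (x₀, t₀) := by
          apply ContinuousAt.prodMk continuousAt_fst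
          have hinv : ContinuousAt (fun q : M × EuclideanSpace ℝ (Fin k) => ‖q.2‖⁻¹) (x₀, t₀) :=
            ContinuousAt.inv₀ ((continuous_norm.comp continuous_snd).continuousAt)
              (show ‖(x₀, t₀).2‖ ≠ 0 from norm_ne_zero_iff.2 ht₀)
          exact hinv.smul continuous_snd.continuousAt
        exact hFcont.continuousAt.comp h1
  · -- positivity
    intro x t ht
    have hnt : (0:ℝ) < ‖t‖ := norm_pos_iff.2 ht
    have h1 : H0 qmin - ε' ≤ F x (‖t‖⁻¹ • t) := hFlb x _ (hunit t ht)
    have h2 : ε' ≤ H0 qmin / 2 := min_le_right _ _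
    have h3 : 0 < F x (‖t‖⁻¹ • t) := by linarith
    exact mul_pos (Real.rpow_pos_of_pos hnt p) h3
  · -- C¹ in t
    intro x
    exact aux_contDiff hp (hFsm x)
  · -- homogeneity
    intro x l hl t
    exact aux_hom hp0 (F x) hl t
  · -- approximation
    intro x t
    rcases eq_or_ne t 0 with rfl | ht
    · have : (0:ℝ) ≤ ε * ‖(0 : EuclideanSpace ℝ (Fin k))‖ ^ p := by positivity
      simpa [h00 x, Real.zero_rpow hp0.ne'] using this
    · have hnt : (0:ℝ) < ‖t‖ := norm_pos_iff.2 ht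
      have hrp : (0:ℝ) ≤ ‖t‖ ^ p := Real.rpow_nonneg hnt.le p
      have hH0t : H0 (x, t) = ‖t‖ ^ p * H0 (x, ‖t‖⁻¹ • t) := by
        have h1 := hhom x ‖t‖ hnt (‖t‖⁻¹ • t)
        rw [smul_smul, mul_inv_cancel₀ hnt.ne', one_smul] at h1
        exact h1
      calc |‖t‖ ^ p * F x (‖t‖⁻¹ • t) - H0 (x, t)|
          = ‖t‖ ^ p * |F x (‖t‖⁻¹ • t) - H0 (x, ‖t‖⁻¹ • t)| := by
            rw [hH0t, ← mul_sub, abs_mul, abs_of_nonneg hrp]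
        _ ≤ ‖t‖ ^ p * ε' := mul_le_mul_of_nonneg_left (hclose x _ (hunit t ht)) hrp
        _ ≤ ε * ‖t‖ ^ p := by
            rw [mul_comm]
            exact mul_le_mul_of_nonneg_right (min_le_left _ _) hrp
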